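/- For every natural number n ≥ 1, (1/n) ∑_{r=1}^{n} ∑_{k=n+1−r}^{n} 1/k² = H_n / n, where H_n := ∑_{k=1}^{n} 1/k, and consequently (1/n) ∑_{r=1}^{n} ∑_{k=n+1−r}^{n} 1/k² ≤ (1 + log n)/n for all n ≥ 1. -/

import Mathlib

/-- `harmonicR m = H_m = ∑_{k=1}^m 1/k`, with `H_0 = 0`. -/
noncomputable def harmonicR (m : ℕ) : ℝ := ∑ k ∈ Finset.range m, (1 : ℝ) / (k + 1)

lemma harmonicR_eq (m : ℕ) : harmonicR m = ∑ k ∈ Finset.Icc 1 m, (1 : ℝ) / k := by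
  rw [harmonicR, Finset.range_eq_Ico, Finset.sum_Ico_eq_sum_range]
  rw [show Finset.Icc 1 m = Finset.Ico 1 (m+1) by rfl, Finset.sum_Ico_eq_sum_range]
  simp [add_comm]

lemma key_sum (n : ℕ) :
    ∑ r ∈ Finset.Icc 1 n, ∑ k ∈ Finset.Icc (n + 1 - r) n, (1 : ℝ) / (k : ℝ) ^ 2
      = harmonicR n := by
  have h1 : ∀ r ∈ Finset.Icc 1 n,
      ∑ k ∈ Finset.Icc (n + 1 - r) n, (1 : ℝ) / (k : ℝ) ^ 2
        = ∑ k ∈ Finset.Icc 1 n, if n + 1 - r ≤ k then (1 : ℝ) / (k : ℝ) ^ 2 else 0 := by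
    intro r hr
    simp only [Finset.mem_Icc] at hr
    rw [← Finset.sum_filter]
    congr 1
    ext k
    simp only [Finset.mem_filter, Finset.mem_Icc]
    omega
  rw [Finset.sum_congr rfl h1, Finset.sum_comm]
  rw [harmonicR_eq]
  apply Finset.sum_congr rfl
  intro k hk
  simp only [Finset.mem_Icc] at hk
  rw [← Finset.sum_filter]
  have hfil : (Finset.Icc 1 n).filter (fun r => n + 1 - r ≤ k) = Finset.Icc (n + 1 - k) n := by
    ext r
    simp only [Finset.mem_filter, Finset.mem_Icc]
    omega
  rw [hfil, Finset.sum_const, Nat.card_Icc]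
  have hcard : n + 1 - (n + 1 - k) = k := by omega
  rw [hcard]
  have hk0 : (k : ℝ) ≠ 0 := Nat.cast_ne_zero.mpr (by omega)
  field_simp
  ring_nf
  rw [← mul_pow, mul_inv_cancel₀ hk0, one_pow]

/-- The average over ranks of the exact MSEs of the plug-in AURC weights equals
`H_n / n` and is therefore bounded by `(1 + log n)/n`. -/
theorem avg_mse_eq_harmonic_div (n : ℕ) (hn : 1 ≤ n) :
    ((1 / n : ℝ) * ∑ r ∈ Finset.Icc 1 n,
        ∑ k ∈ Finset.Icc (n + 1 - r) n, (1 : ℝ) / (k : ℝ) ^ 2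
      = harmonicR n / n)
    ∧ (1 / n : ℝ) * ∑ r ∈ Finset.Icc 1 n,
        ∑ k ∈ Finset.Icc (n + 1 - r) n, (1 : ℝ) / (k : ℝ) ^ 2
      ≤ (1 + Real.log n) / n := by
  have hkey := key_sum n
  have hn0 : (0 : ℝ) < n := by positivity
  constructor
  · rw [hkey]; ring
  · rw [hkey, one_div_mul_eq_div]
    have h2 : harmonicR n = (harmonic n : ℝ) := by
      rw [harmonicR]
      push_cast [harmonic]
      simp [one_div]
    rw [h2]
    gcongr
    exact harmonic_le_one_add_log n
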